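/- Let k be a rational number with k ∉ {0, 2, −2}, and set a = a(k), b = b(k), c = c(k). Then the subgroup of E_k(ℚ) consisting of the point at infinity together with the three points (−ab, 0), (−bc, 0), (−ac, 0) is a subgroup of order 4 isomorphic to (ℤ/2ℤ) × (ℤ/2ℤ), and the two rational points (0, abc) and (0, −abc) of E_k do not belong to this subgroup. -/

import Mathlib

/-- The side `a(k) = 5k² − 4k + 4` of the Heron triangle family. -/
def sideA (k : ℚ) : ℚ := 5 * k ^ 2 - 4 * k + 4

/-- The side `b(k) = (1/2)k(k² − 4k + 20)` of the Heron triangle family. -/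
def sideB (k : ℚ) : ℚ := (1 / 2) * k * (k ^ 2 - 4 * k + 20)

/-- The side `c(k) = (1/2)(k+2)(k² − 4)` of the Heron triangle family. -/
def sideC (k : ℚ) : ℚ := (1 / 2) * (k + 2) * (k ^ 2 - 4)
/-- The elliptic curve `E_k : y² = (x + ab)(x + bc)(x + ac)`, written as the Weierstrass
curve `y² = x³ + (ab + bc + ca)x² + abc(a + b + c)x + (abc)²`. -/
def Ek (k : ℚ) : WeierstrassCurve.Affine ℚ where
  a₁ := 0
  a₂ := sideA k * sideB k + sideB k * sideC k + sideC k * sideA k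
  a₃ := 0
  a₄ := sideA k * sideB k * sideC k * (sideA k + sideB k + sideC k)
  a₆ := (sideA k * sideB k * sideC k) ^ 2

lemma rat_sq_ne_two (q : ℚ) : q ^ 2 ≠ 2 := by
  intro h
  apply irrational_sqrt_two
  refine ⟨|q|, ?_⟩
  have h' : ((q : ℝ)) ^ 2 = 2 := by exact_mod_cast h
  rw [← h', Real.sqrt_sq_eq_abs]
  push_cast
  rfl

lemma rat_sq_ne_three (q : ℚ) : q ^ 2 ≠ 3 := by
  intro h
  apply (Nat.prime_three).irrational_sqrt
  refine ⟨|q|, ?_⟩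
  have h' : ((q : ℝ)) ^ 2 = 3 := by exact_mod_cast h
  rw [show ((3:ℕ):ℝ) = ((3:ℝ)) by norm_num, ← h', Real.sqrt_sq_eq_abs]
  push_cast
  rfl

lemma hA' (k : ℚ) : sideA k ≠ 0 := by
  unfold sideA; nlinarith [sq_nonneg (2*k - 1), sq_nonneg k]

lemma hB' (k : ℚ) (h0 : k ≠ 0) : sideB k ≠ 0 := by
  unfold sideB
  intro h
  rcases mul_eq_zero.mp h with h | h
  · rcases mul_eq_zero.mp h with h | h
    · norm_num at h
    · exact h0 h
  · nlinarith [sq_nonneg (k - 2)]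

lemma hC' (k : ℚ) (h2 : k ≠ 2) (hm2 : k ≠ -2) : sideC k ≠ 0 := by
  unfold sideC
  intro h
  rcases mul_eq_zero.mp h with h | h
  · rcases mul_eq_zero.mp h with h | h
    · norm_num at h
    · exact hm2 (by linarith)
  · have : (k - 2) * (k + 2) = 0 := by linear_combination h
    rcases mul_eq_zero.mp this with h | h
    · exact h2 (by linarith)
    · exact hm2 (by linarith)

lemma hAB' (k : ℚ) (h2 : k ≠ 2) : sideA k ≠ sideB k := by
  unfold sideA sideB
  intro h
  have hq : ((k - 6) / 4) ^ 2 = 2 := by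
    have hcube : (k - 2) * (k ^ 2 - 12 * k + 4) = 0 := by linear_combination -2 * h
    rcases mul_eq_zero.mp hcube with h' | h'
    · exact absurd (by linarith : k = 2) h2
    · field_simp; linear_combination h'
  exact rat_sq_ne_two _ hq

lemma hBC' (k : ℚ) : sideB k ≠ sideC k := by
  unfold sideB sideC
  intro h
  have h' : 3 * k ^ 2 - 12 * k - 4 = 0 := by linear_combination -h
  have hq : ((3 * k - 6) / 4) ^ 2 = 3 := by
    field_simp; linear_combination 3 * h'
  exact rat_sq_ne_three _ hq

lemma cubic_ne (k : ℚ) : k ^ 3 - 8 * k ^ 2 + 4 * k - 16 ≠ 0 := by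
  intro h
  set n := k.num with hn
  set d := (k.den : ℤ) with hd
  have hd0 : (0:ℤ) < d := by positivity
  have hdQ : ((d:ℤ) : ℚ) ≠ 0 := by exact_mod_cast hd0.ne'
  have hnd : (n : ℚ) = k * (d : ℚ) := by
    rw [hn, hd]; push_cast; field_simp [Rat.num_div_den k]
    exact (Rat.mul_den_eq_num k).symm
  have key : n ^ 3 - 8 * n ^ 2 * d + 4 * n * d ^ 2 - 16 * d ^ 3 = 0 := by
    have : ((n ^ 3 - 8 * n ^ 2 * d + 4 * n * d ^ 2 - 16 * d ^ 3 : ℤ) : ℚ) = 0 := by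
      push_cast
      rw [hnd]
      linear_combination ((d:ℤ):ℚ) ^ 3 * h
    exact_mod_cast this
  have hcop : IsCoprime n d := by
    rw [Int.isCoprime_iff_gcd_eq_one]
    exact_mod_cast k.reduced
  have hdvd : d ∣ n ^ 3 := ⟨8 * n ^ 2 - 4 * n * d + 16 * d ^ 2, by linarith⟩
  have hunit : IsUnit d := (hcop.symm.pow_right).isUnit_of_dvd hdvd
  have hd1 : d = 1 := by
    rcases Int.isUnit_iff.mp hunit with h1 | h1
    · exact h1
    · omega
  rw [hd1] at key
  have h16 : n ∣ 16 := ⟨n ^ 2 - 8 * n + 4, by linarith⟩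
  have hle : n.natAbs ≤ 16 := Nat.le_of_dvd (by norm_num) (Int.natAbs_dvd_natAbs.mpr h16)
  have hb1 : -16 ≤ n := by omega
  have hb2 : n ≤ 16 := by omega
  interval_cases n <;> norm_num at key

lemma hAC' (k : ℚ) : sideA k ≠ sideC k := by
  unfold sideA sideC
  intro h
  exact cubic_ne k (by linear_combination -2 * h)

open WeierstrassCurve.Affine in
lemma some_eq_some' {W : WeierstrassCurve.Affine ℚ} {x₁ y₁ x₂ y₂ : ℚ}
    (h₁ : W.Nonsingular x₁ y₁) (h₂ : W.Nonsingular x₂ y₂) (hx : x₁ = x₂) (hy : y₁ = y₂) :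
    Point.some _ _ h₁ = Point.some _ _ h₂ := by subst hx; subst hy; rfl

open WeierstrassCurve.Affine in
/-- for rational `k ∉ {0, 2, −2}`, the point at infinity together with
`(−ab, 0)`, `(−bc, 0)`, `(−ac, 0)` forms a subgroup of `E_k(ℚ)` of order `4`
isomorphic to `(ℤ/2ℤ) × (ℤ/2ℤ)`, and the rational points `(0, abc)` and `(0, −abc)`
of `E_k` do not belong to this subgroup. -/
theorem two_torsion_subgroup (k : ℚ) (h0 : k ≠ 0) (h2 : k ≠ 2) (hm2 : k ≠ -2) :
    ∃ (h1 : (Ek k).Nonsingular (-(sideA k * sideB k)) 0)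
      (h2 : (Ek k).Nonsingular (-(sideB k * sideC k)) 0)
      (h3 : (Ek k).Nonsingular (-(sideA k * sideC k)) 0)
      (h4 : (Ek k).Nonsingular 0 (sideA k * sideB k * sideC k))
      (h5 : (Ek k).Nonsingular 0 (-(sideA k * sideB k * sideC k)))
      (H : AddSubgroup (Ek k).Point),
      (H : Set (Ek k).Point) =
        {Point.zero, Point.some _ _ h1, Point.some _ _ h2, Point.some _ _ h3} ∧
      Nat.card H = 4 ∧
      Nonempty (H ≃+ ZMod 2 × ZMod 2) ∧
      Point.some _ _ h4 ∉ H ∧ Point.some _ _ h5 ∉ H := by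
  have hA := hA' k
  have hB := hB' k h0
  have hC := hC' k h2 hm2
  have hAB := hAB' k h2
  have hBC := hBC' k
  have hAC := hAC' k
  -- nonsingularity of the three 2-torsion points
  have e1 : (Ek k).Nonsingular (-(sideA k * sideB k)) 0 := by
    rw [nonsingular_iff, equation_iff]
    refine ⟨by simp only [Ek]; ring, Or.inl ?_⟩
    simp only [Ek, mul_zero, zero_mul]
    intro h
    exact mul_ne_zero (mul_ne_zero (mul_ne_zero hA hB) (sub_ne_zero.mpr hAC))
      (sub_ne_zero.mpr hBC) (by linear_combination -h)
  have e2 : (Ek k).Nonsingular (-(sideB k * sideC k)) 0 := by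
    rw [nonsingular_iff, equation_iff]
    refine ⟨by simp only [Ek]; ring, Or.inl ?_⟩
    simp only [Ek, mul_zero, zero_mul]
    intro h
    exact mul_ne_zero (mul_ne_zero (mul_ne_zero hB hC) (sub_ne_zero.mpr hAC))
      (sub_ne_zero.mpr hAB) (by linear_combination -h)
  have e3 : (Ek k).Nonsingular (-(sideA k * sideC k)) 0 := by
    rw [nonsingular_iff, equation_iff]
    refine ⟨by simp only [Ek]; ring, Or.inl ?_⟩
    simp only [Ek, mul_zero, zero_mul]
    intro h
    exact mul_ne_zero (mul_ne_zero (mul_ne_zero hA hC) (sub_ne_zero.mpr hBC))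
      (sub_ne_zero.mpr hAB) (by linear_combination h)
  have hABC : sideA k * sideB k * sideC k ≠ 0 := mul_ne_zero (mul_ne_zero hA hB) hC
  have e4 : (Ek k).Nonsingular 0 (sideA k * sideB k * sideC k) := by
    rw [nonsingular_iff, equation_iff]
    refine ⟨by simp only [Ek]; ring, Or.inr ?_⟩
    simp only [Ek, mul_zero, zero_mul, sub_zero]
    intro h
    exact hABC (by linarith)
  have e5 : (Ek k).Nonsingular 0 (-(sideA k * sideB k * sideC k)) := by
    rw [nonsingular_iff, equation_iff]
    refine ⟨by simp only [Ek]; ring, Or.inr ?_⟩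
    simp only [Ek, mul_zero, zero_mul, sub_zero]
    intro h
    exact hABC (by linarith)
  -- distinctness of x-coordinates
  have hx12 : -(sideA k * sideB k) ≠ -(sideB k * sideC k) := by
    intro h; exact hAC (mul_left_cancel₀ hB (by linear_combination -h))
  have hx13 : -(sideA k * sideB k) ≠ -(sideA k * sideC k) := by
    intro h; exact hBC (mul_left_cancel₀ hA (by linear_combination -h))
  have hx23 : -(sideB k * sideC k) ≠ -(sideA k * sideC k) := by
    intro h; exact hAB (mul_right_cancel₀ hC (by linear_combination -h)).symm
  have hnegY : ∀ x : ℚ, (Ek k).negY x 0 = 0 := by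
    intro x; simp [WeierstrassCurve.Affine.negY, Ek]
  -- self addition is zero
  have hself : ∀ {x : ℚ} (h : (Ek k).Nonsingular x 0),
      Point.some _ _ h + Point.some _ _ h = 0 := by
    intro x h
    exact Point.add_self_of_Y_eq (hnegY x).symm
  -- cross additions
  have hcross : ∀ {x₁ x₂ x₃ : ℚ} (hx : x₁ ≠ x₂)
      (h₁ : (Ek k).Nonsingular x₁ 0) (h₂ : (Ek k).Nonsingular x₂ 0)
      (h₃ : (Ek k).Nonsingular x₃ 0)
      (hsum : x₁ + x₂ + x₃ = -(Ek k).a₂),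
      Point.some _ _ h₁ + Point.some _ _ h₂ = Point.some _ _ h₃ := by
    intro x₁ x₂ x₃ hx h₁ h₂ h₃ hsum
    rw [Point.add_of_X_ne hx]
    refine some_eq_some' _ _ ?_ ?_
    · rw [slope_of_X_ne hx]
      simp only [WeierstrassCurve.Affine.addX]
      rw [show (0:ℚ) - 0 = 0 by ring, zero_div]
      simp only [Ek] at hsum ⊢
      linarith
    · rw [slope_of_X_ne hx]
      simp only [WeierstrassCurve.Affine.addY, WeierstrassCurve.Affine.negAddY,
        WeierstrassCurve.Affine.negY]
      rw [show (0:ℚ) - 0 = 0 by ring, zero_div]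
      simp [Ek]
  have ha₂ : -(sideA k * sideB k) + -(sideB k * sideC k) + -(sideA k * sideC k) = -(Ek k).a₂ := by
    simp only [Ek]; ring
  have h12 := hcross hx12 e1 e2 e3 (by simpa only [Ek] using ha₂)
  have h21 := hcross hx12.symm e2 e1 e3 (by simp only [Ek] at ha₂ ⊢; linarith)
  have h13 := hcross hx13 e1 e3 e2 (by simp only [Ek] at ha₂ ⊢; linarith)
  have h31 := hcross hx13.symm e3 e1 e2 (by simp only [Ek] at ha₂ ⊢; linarith)
  have h23 := hcross hx23 e2 e3 e1 (by simp only [Ek] at ha₂ ⊢; linarith)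
  have h32 := hcross hx23.symm e3 e2 e1 (by simp only [Ek] at ha₂ ⊢; linarith)
  -- the subgroup
  set S : Set (Ek k).Point := {Point.zero, Point.some _ _ e1, Point.some _ _ e2, Point.some _ _ e3} with hS
  have hmem : ∀ p : (Ek k).Point, p ∈ S ↔
      p = Point.zero ∨ p = Point.some _ _ e1 ∨ p = Point.some _ _ e2 ∨ p = Point.some _ _ e3 := by
    intro p; simp [hS]
  have hneg : ∀ p ∈ S, -p ∈ S := by
    intro p hp
    rw [hmem] at hp ⊢
    rcases hp with rfl | rfl | rfl | rfl
    · left; rw [← Point.zero_def, neg_zero]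
    · right; left; rw [Point.neg_some]; exact some_eq_some' _ _ rfl (hnegY _)
    · right; right; left; rw [Point.neg_some]; exact some_eq_some' _ _ rfl (hnegY _)
    · right; right; right; rw [Point.neg_some]; exact some_eq_some' _ _ rfl (hnegY _)
  have hadd : ∀ p ∈ S, ∀ q ∈ S, p + q ∈ S := by
    intro p hp q hq
    rw [hmem] at hp hq ⊢
    rcases hp with rfl | rfl | rfl | rfl <;> rcases hq with rfl | rfl | rfl | rfl <;>
      simp only [← Point.zero_def, zero_add, add_zero, hself, h12, h21, h13, h31, h23, h32] <;> tauto
  -- distinctness of points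
  have hne01 : (Point.zero : (Ek k).Point) ≠ Point.some _ _ e1 := by
    intro hh; cases hh
  have hne02 : (Point.zero : (Ek k).Point) ≠ Point.some _ _ e2 := by
    intro hh; cases hh
  have hne03 : (Point.zero : (Ek k).Point) ≠ Point.some _ _ e3 := by
    intro hh; cases hh
  have hne12 : (Point.some _ _ e1 : (Ek k).Point) ≠ Point.some _ _ e2 := by
    intro hh; rw [Point.some.injEq] at hh; exact hx12 hh.1
  have hne13 : (Point.some _ _ e1 : (Ek k).Point) ≠ Point.some _ _ e3 := by
    intro hh; rw [Point.some.injEq] at hh; exact hx13 hh.1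
  have hne23 : (Point.some _ _ e2 : (Ek k).Point) ≠ Point.some _ _ e3 := by
    intro hh; rw [Point.some.injEq] at hh; exact hx23 hh.1
  set Hgrp : AddSubgroup (Ek k).Point :=
    { carrier := S
      add_mem' := fun {p} {q} hp hq => hadd p hp q hq
      zero_mem' := by rw [hmem]; left; rfl
      neg_mem' := fun {p} hp => hneg p hp } with hHgrp
  have hmemH : ∀ p : (Ek k).Point, p ∈ Hgrp ↔ p ∈ S := fun _ => Iff.rfl
  -- cardinality
  have hncard : S.ncard = 4 := by
    rw [hS]
    rw [Set.ncard_insert_of_notMem (by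
      simp only [Set.mem_insert_iff, Set.mem_singleton_iff]; push_neg
      exact ⟨hne01, hne02, hne03⟩)]
    rw [Set.ncard_insert_of_notMem (by
      simp only [Set.mem_insert_iff, Set.mem_singleton_iff]; push_neg
      exact ⟨hne12, hne13⟩)]
    rw [Set.ncard_pair hne23]
  have hcard : Nat.card Hgrp = 4 := (Nat.card_coe_set_eq S).trans hncard
  -- every element is 2-torsion
  have htors : ∀ g : Hgrp, 2 • g = 0 := by
    rintro ⟨p, hp⟩
    rw [Subtype.ext_iff]
    push_cast [two_nsmul]
    rcases (hmem p).mp hp with rfl | rfl | rfl | rfl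
    · rw [← Point.zero_def, add_zero]
    · exact hself e1
    · exact hself e2
    · exact hself e3
  have he1mem : Point.some _ _ e1 ∈ Hgrp := (hmemH _).mpr ((hmem _).mpr (Or.inr (Or.inl rfl)))
  have hP1 : (⟨Point.some _ _ e1, he1mem⟩ : Hgrp) ≠ 0 := by
    intro hh
    exact hne01 (congrArg Subtype.val hh).symm
  haveI hK4 : IsAddKleinFour Hgrp := by
    refine ⟨hcard, ?_⟩
    refine Nat.dvd_antisymm ?_ ?_
    · exact AddMonoid.exponent_dvd_of_forall_nsmul_eq_zero htors
    · have horder : addOrderOf (⟨Point.some _ _ e1, he1mem⟩ : Hgrp) = 2 :=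
        addOrderOf_eq_prime (htors _) hP1
      exact horder ▸ AddMonoid.addOrder_dvd_exponent _
  refine ⟨e1, e2, e3, e4, e5, Hgrp, rfl, hcard, IsAddKleinFour.nonempty_addEquiv, ?_, ?_⟩
  · intro hh
    rcases (hmem _).mp ((hmemH _).mp hh) with hh' | hh' | hh' | hh'
    · cases hh'
    · rw [Point.some.injEq] at hh'
      exact mul_ne_zero hA hB (by linarith [hh'.1])
    · rw [Point.some.injEq] at hh'
      exact mul_ne_zero hB hC (by linarith [hh'.1])
    · rw [Point.some.injEq] at hh'
      exact mul_ne_zero hA hC (by linarith [hh'.1])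
  · intro hh
    rcases (hmem _).mp ((hmemH _).mp hh) with hh' | hh' | hh' | hh'
    · cases hh'
    · rw [Point.some.injEq] at hh'
      exact mul_ne_zero hA hB (by linarith [hh'.1])
    · rw [Point.some.injEq] at hh'
      exact mul_ne_zero hB hC (by linarith [hh'.1])
    · rw [Point.some.injEq] at hh'
      exact mul_ne_zero hA hC (by linarith [hh'.1])
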